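/- Define p_2(n,3,x,s) = -∑_j (n/(n-j)) C(n-j,2n-3j) s^j x^{2n-3j} for n ≥ 1. Then p_2(n,3,x+1,x) = (-1)^{n-1} x^n − L_n(x,x), where L_n is the Lucas polynomial. -/

import Mathlib

/-- The bivariate Lucas polynomials: `L 0 = 2`, `L 1 = x`,
`L (n+2) = x * L (n+1) + s * L n`. -/
def lucas (x s : ℚ) : ℕ → ℚ
  | 0 => 2
  | 1 => x
  | (n + 2) => x * lucas x s (n + 1) + s * lucas x s n

/-- The polynomial `p₂(n,3,x,s) = -∑_j (n/(n-j)) C(n-j, 2n-3j) s^j x^{2n-3j}`,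
the sum being over `j` with `3j ≤ 2n` and `2n - 3j ≤ n - j` (i.e. `n ≤ 2j`). -/
def p2three (x s : ℚ) (n : ℕ) : ℚ :=
  -∑ j ∈ (Finset.range (2 * n / 3 + 1)).filter (fun j => n ≤ 2 * j),
    ((n : ℚ) / ((n : ℚ) - (j : ℚ))) * (Nat.choose (n - j) (2 * n - 3 * j) : ℚ) *
      s ^ j * x ^ (2 * n - 3 * j)

lemma sum_to_big (N M : ℕ) (h : N ≤ M) (P : ℕ → Prop) [DecidablePred P] (f : ℕ → ℚ) :
    ∑ j ∈ (Finset.range N).filter P, f j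
      = ∑ j ∈ Finset.range M, if j < N ∧ P j then f j else 0 := by
  rw [← Finset.sum_filter]
  apply Finset.sum_congr _ (fun _ _ => rfl)
  ext j
  simp only [Finset.mem_filter, Finset.mem_range]
  constructor
  · rintro ⟨h1, h2⟩; exact ⟨by omega, h1, h2⟩
  · rintro ⟨_, h2, h3⟩; exact ⟨h2, h3⟩

lemma sum_shift1 (M : ℕ) (g : ℕ → ℚ) :
    ∑ j ∈ Finset.range M, g j
      = ∑ j ∈ Finset.range (M+1), (if 1 ≤ j then g (j-1) else 0) := by
  rw [Finset.sum_range_succ']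
  simp

lemma sum_shift2 (M : ℕ) (g : ℕ → ℚ) :
    ∑ j ∈ Finset.range M, g j
      = ∑ j ∈ Finset.range (M+2), (if 2 ≤ j then g (j-2) else 0) := by
  rw [Finset.sum_range_succ', Finset.sum_range_succ']
  simp

lemma rel1 (A B : ℕ) (hB : 1 ≤ B) (hA : 1 ≤ A) :
    (B:ℚ) * (Nat.choose A B) = (A:ℚ) * Nat.choose (A-1) (B-1) := by
  have := Nat.add_one_mul_choose_eq (A-1) (B-1)
  rw [Nat.sub_add_cancel hA, Nat.sub_add_cancel hB] at this
  have := congrArg (fun t : ℕ => (t:ℚ)) this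
  push_cast at this
  linarith

lemma rel2 (A B : ℕ) (hBA : B ≤ A - 1) (hA : 1 ≤ A) :
    ((A:ℚ) - B) * Nat.choose A B = (A:ℚ) * Nat.choose (A-1) B := by
  have hBA' : B ≤ A := by omega
  have h1 : Nat.choose A B = Nat.choose A (A - B) := (Nat.choose_symm hBA').symm ▸ rfl
  have h2 : Nat.choose (A-1) B = Nat.choose (A-1) (A-1-B) := (Nat.choose_symm hBA).symm ▸ rfl
  have key := Nat.add_one_mul_choose_eq (A-1) (A-1-B)
  rw [Nat.sub_add_cancel hA] at key
  have e1 : A - 1 - B + 1 = A - B := by omega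
  rw [e1] at key
  rw [h1, h2]
  have hcast : ((A:ℚ) - B) = ((A - B : ℕ) : ℚ) := by
    push_cast [Nat.cast_sub hBA']; ring
  rw [hcast]
  have := congrArg (fun t : ℕ => (t:ℚ)) key
  push_cast at this
  linarith

lemma key_main (n k : ℕ) (h1 : 3*k+1 ≤ 2*n) (h2 : n ≤ 2*k) :
    ((n:ℚ)+3)/(((n:ℚ)+3)-((k:ℚ)+2)) * (Nat.choose (n+1-k) (2*n-3*k) : ℚ)
    = ((n:ℚ)+1)/(((n:ℚ)+1)-((k:ℚ)+1)) * (Nat.choose (n-k) (2*n-3*k-1) : ℚ)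
    + (n:ℚ)/((n:ℚ)-(k:ℚ)) * (Nat.choose (n-k) (2*n-3*k) : ℚ) := by
  have hkn : k + 1 ≤ n := by omega
  have hB : 1 ≤ 2*n-3*k := by omega
  have hA : 1 ≤ n+1-k := by omega
  have hBA : 2*n-3*k ≤ (n+1-k) - 1 := by omega
  have h1' := rel1 (n+1-k) (2*n-3*k) hB hA
  have h2' := rel2 (n+1-k) (2*n-3*k) hBA hA
  rw [show n+1-k-1 = n-k from by omega] at h1' h2'
  have cA : ((n+1-k : ℕ):ℚ) = (n:ℚ)-k+1 := by
    rw [Nat.cast_sub (by omega)]; push_cast; ring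
  have cB : ((2*n-3*k : ℕ):ℚ) = 2*(n:ℚ)-3*k := by
    rw [Nat.cast_sub (by omega)]; push_cast; ring
  rw [cA, cB] at h1' h2'
  have hk' : ((k:ℚ)+1) ≤ (n:ℚ) := by exact_mod_cast hkn
  have ha : (n:ℚ)-(k:ℚ) ≠ 0 := ne_of_gt (by linarith)
  have ha1 : (n:ℚ)-(k:ℚ)+1 ≠ 0 := ne_of_gt (by linarith)
  have hc1 : ((Nat.choose (n-k) (2*n-3*k-1)) : ℚ)
      = (2*(n:ℚ)-3*k) * (Nat.choose (n+1-k) (2*n-3*k) : ℚ) / ((n:ℚ)-k+1) := by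
    rw [eq_div_iff ha1]; linarith [h1']
  have hc2 : ((Nat.choose (n-k) (2*n-3*k)) : ℚ)
      = ((n:ℚ)-k+1-(2*(n:ℚ)-3*k)) * (Nat.choose (n+1-k) (2*n-3*k) : ℚ) / ((n:ℚ)-k+1) := by
    rw [eq_div_iff ha1]; linarith [h2']
  rw [show ((n:ℚ)+3)-((k:ℚ)+2) = (n:ℚ)-k+1 from by ring,
     show ((n:ℚ)+1)-((k:ℚ)+1) = (n:ℚ)-k from by ring, hc1, hc2]
  field_simp
  ring

lemma p2_rec (X S : ℚ) (n : ℕ) (hn : 1 ≤ n) :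
    p2three X S (n+3) = X*S*p2three X S (n+1) + S^2 * p2three X S n := by
  unfold p2three
  rw [sum_to_big (2*(n+3)/3+1) (2*n+9) (by omega),
      sum_to_big (2*(n+1)/3+1) (2*n+8) (by omega),
      sum_to_big (2*n/3+1) (2*n+7) (by omega),
      sum_shift1 (2*n+8), sum_shift2 (2*n+7),
      show 2*n+8+1 = 2*n+9 from by omega, show 2*n+7+2 = 2*n+9 from by omega]
  rw [mul_neg, mul_neg, ← neg_add, neg_inj, Finset.mul_sum, Finset.mul_sum,
      ← Finset.sum_add_distrib]
  apply Finset.sum_congr rfl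
  intro j hj
  by_cases h3 : n+3 ≤ 2*j ∧ 3*j ≤ 2*n+6
  · obtain ⟨k, rfl⟩ : ∃ k, j = k+2 := ⟨j-2, by omega⟩
    rw [if_pos (show (1:ℕ) ≤ k+2 from by omega), if_pos (show (2:ℕ) ≤ k+2 from by omega),
        show k+2-1 = k+1 from rfl, show k+2-2 = k from rfl,
        if_pos (show k+2 < 2*(n+3)/3+1 ∧ n+3 ≤ 2*(k+2) from by omega)]
    by_cases hb : 3*k+1 ≤ 2*n
    · by_cases hc : n ≤ 2*k
      · -- main case
        rw [if_pos (show k+1 < 2*(n+1)/3+1 ∧ n+1 ≤ 2*(k+1) from by omega),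
            if_pos (show k < 2*n/3+1 ∧ n ≤ 2*k from by omega),
            show n+3-(k+2) = n+1-k from by omega,
            show 2*(n+3)-3*(k+2) = 2*n-3*k from by omega,
            show n+1-(k+1) = n-k from by omega,
            show 2*(n+1)-3*(k+1) = 2*n-3*k-1 from by omega]
        obtain ⟨b, hbb⟩ : ∃ b, 2*n-3*k = b+1 := ⟨2*n-3*k-1, by omega⟩
        have hbb' : 2*n-3*k-1 = b := by omega
        have hk := key_main n k hb hc
        rw [hbb', hbb] at hk ⊢
        push_cast at hk ⊢
        linear_combination (S^(k+2) * X^(b+1)) * hk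
      · -- boundary: n = 2k+1
        have hn' : n = 2*k+1 := by omega
        subst hn'
        rw [if_pos (show k+1 < 2*((2*k+1)+1)/3+1 ∧ (2*k+1)+1 ≤ 2*(k+1) from by omega),
            if_neg (show ¬(k < 2*(2*k+1)/3+1 ∧ 2*k+1 ≤ 2*k) from by omega),
            show 2*k+1+3-(k+2) = k+2 from by omega,
            show 2*(2*k+1+3)-3*(k+2) = k+2 from by omega,
            show 2*k+1+1-(k+1) = k+1 from by omega,
            show 2*(2*k+1+1)-3*(k+1) = k+1 from by omega,
            Nat.choose_self, Nat.choose_self]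
        push_cast
        have h1 : (k:ℚ)+2 ≠ 0 := by positivity
        have h2 : (k:ℚ)+1 ≠ 0 := by positivity
        rw [show (2*(k:ℚ)+1+3)-((k:ℚ)+2) = (k:ℚ)+2 from by ring,
            show (2*(k:ℚ)+1+1)-((k:ℚ)+1) = (k:ℚ)+1 from by ring]
        field_simp
        ring
    · -- boundary: 3k = 2n
      obtain ⟨m, rfl⟩ : ∃ m, k = 2*m := ⟨k/2, by omega⟩
      have hn' : n = 3*m := by omega
      subst hn'
      have hm : 1 ≤ m := by omega
      rw [if_neg (show ¬(2*m+1 < 2*(3*m+1)/3+1 ∧ 3*m+1 ≤ 2*(2*m+1)) from by omega),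
          if_pos (show 2*m < 2*(3*m)/3+1 ∧ 3*m ≤ 2*(2*m) from by omega),
          show 3*m+3-(2*m+2) = m+1 from by omega,
          show 2*(3*m+3)-3*(2*m+2) = 0 from by omega,
          show 3*m-2*m = m from by omega,
          show 2*(3*m)-3*(2*m) = 0 from by omega,
          Nat.choose_zero_right, Nat.choose_zero_right]
      push_cast
      have h1 : (m:ℚ) ≠ 0 := by
        have : (1:ℚ) ≤ (m:ℚ) := by exact_mod_cast hm
        linarith
      have h2 : (m:ℚ)+1 ≠ 0 := by positivity
      rw [show (3*(m:ℚ)+3)-(2*(m:ℚ)+2) = (m:ℚ)+1 from by ring,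
          show (3*(m:ℚ))-(2*(m:ℚ)) = (m:ℚ) from by ring]
      field_simp
      ring
  · rw [if_neg (show ¬(j < 2*(n+3)/3+1 ∧ n+3 ≤ 2*j) from by omega)]
    split_ifs <;> first | (exfalso; omega) | ring

lemma lucas_rec (x s : ℚ) (m : ℕ) :
    lucas x s (m+2) = x * lucas x s (m+1) + s * lucas x s m := rfl

lemma main_aux : ∀ n : ℕ, 1 ≤ n → ∀ x : ℚ,
    p2three (x + 1) x n = (-1) ^ (n - 1) * x ^ n - lucas x x n := by
  intro n
  induction n using Nat.strong_induction_on with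
  | _ n ih =>
    match n with
    | 0 => intro h x; exact absurd h (by omega)
    | 1 => intro _ x
           unfold p2three
           rw [show (Finset.range (2*1/3+1)).filter (fun j => 1 ≤ 2*j) = ∅ from by decide]
           simp [lucas]
    | 2 => intro _ x
           unfold p2three
           rw [show (Finset.range (2*2/3+1)).filter (fun j => 2 ≤ 2*j) = {1} from by decide]
           rw [Finset.sum_singleton]
           norm_num [lucas]
           ring
    | 3 => intro _ x
           unfold p2three
           rw [show (Finset.range (2*3/3+1)).filter (fun j => 3 ≤ 2*j) = {2} from by decide]
           rw [Finset.sum_singleton]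
           norm_num [lucas]
           ring
    | (m+4) =>
      intro _ x
      have h1 := ih (m+1) (by omega) (by omega) x
      have h2 := ih (m+2) (by omega) (by omega) x
      have hrec := p2_rec (x+1) x (m+1) (by omega)
      rw [show m+1+3 = m+4 from rfl, show m+1+1 = m+2 from rfl] at hrec
      rw [hrec, h1, h2,
          show m+4-1 = m+3 from rfl, show m+2-1 = m+1 from rfl, show m+1-1 = m from rfl,
          show m+4 = (m+2)+2 from rfl, lucas_rec x x (m+2),
          show m+2+1 = (m+1)+2 from rfl, lucas_rec x x (m+1)]
      ring

theorem stmt_12 (n : ℕ) (hn : 1 ≤ n) (x : ℚ) :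
    p2three (x + 1) x n = (-1) ^ (n - 1) * x ^ n - lucas x x n :=
  main_aux n hn x
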